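/- (Lemma on the serial orbit in real time) Let Φ : 𝔹^n × 𝔹^m → 𝔹^n, Ψ : 𝔹^p × 𝔹^n → 𝔹^p, μ ∈ 𝔹^n, δ ∈ 𝔹^p, a signal u ∈ S^(m), and progressive functions ρ ∈ Pₙ, ρ̃ ∈ P_p. Then for all t ∈ ℝ: (Φ^ρ(μ,u,t), Ψ^ρ̃(δ, Φ^ρ(μ,u,·), t)) = (Ψ∗Φ)^(ρ,ρ̃)((μ,δ), u, t). That is, the pair formed by the orbit of Φ under excitation ρ and the orbit of Ψ under excitation ρ̃ driven by the first orbit equals the orbit of the serial composition Ψ∗Φ under excitation (ρ,ρ̃). -/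

import Mathlib

open Classical

/-- `Φ^ν` : the asynchronous (partial) application of `Φ` controlled by `ν`. -/
def phiNu {n m : ℕ} (Φ : (Fin n → Bool) → (Fin m → Bool) → (Fin n → Bool))
    (ν : Fin n → Bool) (μ : Fin n → Bool) (lam : Fin m → Bool) : Fin n → Bool :=
  fun i => xor (!(ν i) && μ i) (ν i && Φ μ lam i)

/-- `Ψ ∗ Φ` : the serial composition, identifying `𝔹^(n+p)` with `𝔹^n × 𝔹^p`. -/
def serial {n m p : ℕ}
    (Ψ : (Fin p → Bool) → (Fin n → Bool) → (Fin p → Bool))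
    (Φ : (Fin n → Bool) → (Fin m → Bool) → (Fin n → Bool))
    (μδ : (Fin n → Bool) × (Fin p → Bool)) (lam : Fin m → Bool) :
    (Fin n → Bool) × (Fin p → Bool) :=
  (Φ μδ.1 lam, Ψ μδ.2 (Φ μδ.1 lam))

/-- A signal: eventually-left-constant, piecewise constant over an unbounded
increasing sequence of switching times. -/
def IsSignal {α : Type*} (x : ℝ → α) : Prop :=
  ∃ (μ : α) (t : ℕ → ℝ), StrictMono t ∧ (∀ M : ℝ, ∃ k, M < t k) ∧
    (∀ s, s < t 0 → x s = μ) ∧ ∀ k, ∀ s, t k ≤ s → s < t (k + 1) → x s = x (t k)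

/-- A progressive function: supported on an unbounded increasing sequence, with
each coordinate equal to `1` infinitely often on the sequence. -/
def IsProgressive {n : ℕ} (ρ : ℝ → Fin n → Bool) : Prop :=
  ∃ t : ℕ → ℝ, StrictMono t ∧ (∀ M : ℝ, ∃ k, M < t k) ∧
    (∀ s, s ∉ Set.range t → ρ s = fun _ => false) ∧
    ∀ i : Fin n, {k : ℕ | ρ (t k) i = true}.Infinite

/-- The recursive state sequence `ω₀, ω₁, ...` of an orbit over the grid `T`. -/
def omegaSeq {S I E : Type*} (F : E → S → I → S) (μ : S) (u : ℝ → I) (ρ : ℝ → E)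
    (T : ℕ → ℝ) : ℕ → S
  | 0 => F (ρ (T 0)) μ (u (T 0))
  | k + 1 => F (ρ (T (k + 1))) (omegaSeq F μ u ρ T k) (u (T (k + 1)))

/-- The orbit over an explicit grid `T`: value `μ` before `T 0` and `ωₖ` on
`[T k, T (k+1))`. -/
noncomputable def orbitOn {S I E : Type*} (F : E → S → I → S) (μ : S) (u : ℝ → I)
    (ρ : ℝ → E) (T : ℕ → ℝ) : ℝ → S := fun t =>
  if t < T 0 then μ else omegaSeq F μ u ρ T (sInf {k : ℕ | t < T (k + 1)})

def IsGrid (T : ℕ → ℝ) : Prop := StrictMono T ∧ ∀ M : ℝ, ∃ k, M < T k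

/-- `u` admits a signal representation over the grid `T`. -/
def FitsGrid {α : Type*} (u : ℝ → α) (T : ℕ → ℝ) : Prop :=
  (∀ s s', s < T 0 → s' < T 0 → u s = u s') ∧
    ∀ k, ∀ s, T k ≤ s → s < T (k + 1) → u s = u (T k)

/-- `ρ` vanishes (equals `z`) outside the range of `T`. -/
def SupportedOn {E : Type*} (z : E) (ρ : ℝ → E) (T : ℕ → ℝ) : Prop :=
  ∀ s, s ∉ Set.range T → ρ s = z

/-- The orbit `Φ^ρ(μ,u,·)`, defined over some common grid fitting `u` and
supporting `ρ` (chosen by choice; the value is independent of the choice). -/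
noncomputable def orbit {S I E : Type*} (F : E → S → I → S) (z : E)
    (μ : S) (u : ℝ → I) (ρ : ℝ → E) : ℝ → S :=
  if h : ∃ T, IsGrid T ∧ FitsGrid u T ∧ SupportedOn z ρ T
  then orbitOn F μ u ρ h.choose else fun _ => μ

/-- The zero vector of `𝔹^n`. -/
def zeroB (n : ℕ) : Fin n → Bool := fun _ => false

/-- The transition family of the serial composition `Ψ ∗ Φ`, excited by pairs:
`(Ψ∗Φ)^(ν,ν̃) = Ψ^ν̃ ∗ Φ^ν`. -/
def serialNu {n m p : ℕ}
    (Ψ : (Fin p → Bool) → (Fin n → Bool) → (Fin p → Bool))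
    (Φ : (Fin n → Bool) → (Fin m → Bool) → (Fin n → Bool))
    (νν : (Fin n → Bool) × (Fin p → Bool)) :
    (Fin n → Bool) × (Fin p → Bool) → (Fin m → Bool) →
      (Fin n → Bool) × (Fin p → Bool) :=
  serial (phiNu Ψ νν.2) (phiNu Φ νν.1)
/-! ### Basic grid lemmas -/

lemma grid_exists_k {T : ℕ → ℝ} (hT : IsGrid T) {t : ℝ} (h0 : T 0 ≤ t) :
    ∃ k, T k ≤ t ∧ t < T (k + 1) := by
  obtain ⟨K, hK⟩ := hT.2 t
  have hne : {j : ℕ | t < T j}.Nonempty := ⟨K, hK⟩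
  have hj0mem : t < T (sInf {j : ℕ | t < T j}) := Nat.sInf_mem hne
  have hj0ne : sInf {j : ℕ | t < T j} ≠ 0 := by
    intro h
    rw [h] at hj0mem
    exact absurd h0 (not_le.2 hj0mem)
  obtain ⟨k, hk⟩ := Nat.exists_eq_succ_of_ne_zero hj0ne
  rw [hk] at hj0mem
  refine ⟨k, ?_, hj0mem⟩
  by_contra h
  push_neg at h
  have hmem : k ∈ {j : ℕ | t < T j} := h
  have := Nat.sInf_le hmem
  omega

lemma grid_sInf {T : ℕ → ℝ} (hT : IsGrid T) {t : ℝ} {k : ℕ}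
    (h1 : T k ≤ t) (h2 : t < T (k + 1)) : sInf {j : ℕ | t < T (j + 1)} = k := by
  have hk : k ∈ {j : ℕ | t < T (j + 1)} := h2
  refine le_antisymm (Nat.sInf_le hk) (le_csInf ⟨k, hk⟩ ?_)
  intro j hj
  by_contra h
  push_neg at h
  have hTle : T (j + 1) ≤ T k := hT.1.monotone (by omega)
  exact absurd h1 (not_le.2 (lt_of_lt_of_le hj hTle))

lemma orbitOn_neg {S I E : Type*} (F : E → S → I → S) (μ : S) (u : ℝ → I) (ρ : ℝ → E)
    {T : ℕ → ℝ} {t : ℝ} (h : t < T 0) : orbitOn F μ u ρ T t = μ := if_pos h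

lemma orbitOn_eval {S I E : Type*} (F : E → S → I → S) (μ : S) (u : ℝ → I) (ρ : ℝ → E)
    {T : ℕ → ℝ} (hT : IsGrid T) {t : ℝ} {k : ℕ} (h1 : T k ≤ t) (h2 : t < T (k + 1)) :
    orbitOn F μ u ρ T t = omegaSeq F μ u ρ T k := by
  have h0 : ¬ t < T 0 := not_lt.2 (le_trans (hT.1.monotone (Nat.zero_le k)) h1)
  rw [orbitOn, if_neg h0, grid_sInf hT h1 h2]

lemma fitsGrid_orbitOn {S I E : Type*} (F : E → S → I → S) (μ : S) (u : ℝ → I) (ρ : ℝ → E)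
    {T : ℕ → ℝ} (hT : IsGrid T) : FitsGrid (orbitOn F μ u ρ T) T := by
  constructor
  · intro s s' h h'
    rw [orbitOn_neg F μ u ρ h, orbitOn_neg F μ u ρ h']
  · intro k s h1 h2
    rw [orbitOn_eval F μ u ρ hT h1 h2,
      orbitOn_eval F μ u ρ hT (le_refl (T k)) (hT.1 (Nat.lt_succ_self k))]
/-! ### Fold characterization of the state sequence -/

lemma omegaSeq_eq_foldl {S I E : Type*} (F : E → S → I → S) (μ : S) (u : ℝ → I)
    (ρ : ℝ → E) (T : ℕ → ℝ) (k : ℕ) :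
    omegaSeq F μ u ρ T k =
      ((List.range (k + 1)).map T).foldl (fun ω s => F (ρ s) ω (u s)) μ := by
  induction k with
  | zero => simp [omegaSeq, List.range_succ]
  | succ k ih =>
    rw [List.range_succ, List.map_append, List.foldl_append, ← ih]
    simp [omegaSeq]

lemma foldl_filter_eq {S I E : Type*} (F : E → S → I → S) (z : E) (u : ℝ → I) (ρ : ℝ → E)
    (hz : ∀ s i, F z s i = s) :
    ∀ (L : List ℝ) (μ : S),
      L.foldl (fun ω s => F (ρ s) ω (u s)) μ =
      (L.filter (fun s => decide (ρ s ≠ z))).foldl (fun ω s => F (ρ s) ω (u s)) μ := by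
  intro L
  induction L with
  | nil => intro μ; rfl
  | cons a L ih =>
    intro μ
    by_cases h : ρ a = z
    · rw [List.filter_cons_of_neg (by simp [h]), List.foldl_cons, h, hz]
      exact ih μ
    · rw [List.filter_cons_of_pos (by simp [h]), List.foldl_cons, List.foldl_cons]
      exact ih _

lemma mem_stepList {E : Type*} {z : E} {ρ : ℝ → E} {T : ℕ → ℝ} (hT : IsGrid T)
    (hsup : SupportedOn z ρ T) {t : ℝ} {k : ℕ} (h1 : T k ≤ t) (h2 : t < T (k + 1)) {s : ℝ} :
    s ∈ ((List.range (k + 1)).map T).filter (fun s => decide (ρ s ≠ z)) ↔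
      (ρ s ≠ z ∧ s ≤ t) := by
  constructor
  · intro hs
    rw [List.mem_filter] at hs
    obtain ⟨hs1, hs2⟩ := hs
    have hzz : ρ s ≠ z := of_decide_eq_true hs2
    obtain ⟨j, hj, rfl⟩ := List.mem_map.1 hs1
    have hjk : j ≤ k := by
      have := List.mem_range.1 hj
      omega
    exact ⟨hzz, le_trans (hT.1.monotone hjk) h1⟩
  · rintro ⟨hzz, hst⟩
    have hs : s ∈ Set.range T := by
      by_contra h
      exact hzz (hsup s h)
    obtain ⟨j, rfl⟩ := hs
    rw [List.mem_filter]
    refine ⟨List.mem_map.2 ⟨j, ?_, rfl⟩, decide_eq_true hzz⟩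
    rw [List.mem_range]
    by_contra h
    push_neg at h
    have : T (k + 1) ≤ T j := hT.1.monotone h
    exact absurd h2 (not_lt.2 (le_trans this hst))

lemma stepList_sorted {E : Type*} (z : E) (ρ : ℝ → E) {T : ℕ → ℝ} (hT : StrictMono T) (k : ℕ) :
    (((List.range (k + 1)).map T).filter (fun s => decide (ρ s ≠ z))).Pairwise (· < ·) := by
  apply List.Pairwise.sublist List.filter_sublist
  rw [List.pairwise_map]
  exact (List.pairwise_lt_range (n := k + 1)).imp (fun h => hT h)

lemma stepList_nodup {E : Type*} (z : E) (ρ : ℝ → E) {T : ℕ → ℝ} (hT : StrictMono T) (k : ℕ) :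
    (((List.range (k + 1)).map T).filter (fun s => decide (ρ s ≠ z))).Nodup :=
  (stepList_sorted z ρ hT k).nodup
/-! ### Grid invariance of the orbit -/

lemma stepList_eq {E : Type*} {z : E} {ρ : ℝ → E} {T T' : ℕ → ℝ}
    (hT : IsGrid T) (hT' : IsGrid T')
    (hs : SupportedOn z ρ T) (hs' : SupportedOn z ρ T') {t : ℝ} {k k' : ℕ}
    (h1 : T k ≤ t) (h2 : t < T (k + 1)) (h1' : T' k' ≤ t) (h2' : t < T' (k' + 1)) :
    ((List.range (k + 1)).map T).filter (fun s => decide (ρ s ≠ z)) =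
    ((List.range (k' + 1)).map T').filter (fun s => decide (ρ s ≠ z)) := by
  have hperm : List.Perm (((List.range (k + 1)).map T).filter (fun s => decide (ρ s ≠ z)))
      (((List.range (k' + 1)).map T').filter (fun s => decide (ρ s ≠ z))) := by
    rw [List.perm_ext_iff_of_nodup (stepList_nodup z ρ hT.1 k) (stepList_nodup z ρ hT'.1 k')]
    intro a
    rw [mem_stepList hT hs h1 h2, mem_stepList hT' hs' h1' h2']
  exact List.Perm.eq_of_pairwise'
    ((stepList_sorted z ρ hT.1 k).imp le_of_lt)
    ((stepList_sorted z ρ hT'.1 k').imp le_of_lt) hperm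

lemma stepList_nil {E : Type*} {z : E} {ρ : ℝ → E} {T V : ℕ → ℝ}
    (hT : IsGrid T) (hsT : SupportedOn z ρ T) {t : ℝ} {k : ℕ}
    (h1 : T k ≤ t) (h2 : t < T (k + 1))
    (hsV : SupportedOn z ρ V) (hV : Monotone V) (hV0 : t < V 0) :
    ((List.range (k + 1)).map T).filter (fun s => decide (ρ s ≠ z)) = [] := by
  rw [List.eq_nil_iff_forall_not_mem]
  intro s hmem
  obtain ⟨hzz, hst⟩ := (mem_stepList hT hsT h1 h2).1 hmem
  have hsr : s ∈ Set.range V := by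
    by_contra h
    exact hzz (hsV s h)
  obtain ⟨j, rfl⟩ := hsr
  exact absurd (lt_of_le_of_lt hst hV0) (not_lt.2 (hV (Nat.zero_le j)))

lemma orbitOn_eq_filterFold {S I E : Type*} (F : E → S → I → S) (z : E) (μ : S) (u : ℝ → I)
    (ρ : ℝ → E) (hz : ∀ s i, F z s i = s) {T : ℕ → ℝ} (hT : IsGrid T) {t : ℝ} {k : ℕ}
    (h1 : T k ≤ t) (h2 : t < T (k + 1)) :
    orbitOn F μ u ρ T t =
      (((List.range (k + 1)).map T).filter (fun s => decide (ρ s ≠ z))).foldl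
        (fun ω s => F (ρ s) ω (u s)) μ := by
  rw [orbitOn_eval F μ u ρ hT h1 h2, omegaSeq_eq_foldl, foldl_filter_eq F z u ρ hz]

lemma orbitOn_invariant {S I E : Type*} (F : E → S → I → S) (z : E) (μ : S) (u : ℝ → I)
    (ρ : ℝ → E) (hz : ∀ s i, F z s i = s) {T T' : ℕ → ℝ}
    (hT : IsGrid T) (hT' : IsGrid T')
    (hs : SupportedOn z ρ T) (hs' : SupportedOn z ρ T') (t : ℝ) :
    orbitOn F μ u ρ T t = orbitOn F μ u ρ T' t := by
  by_cases ht : t < T 0 <;> by_cases ht' : t < T' 0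
  · rw [orbitOn_neg F μ u ρ ht, orbitOn_neg F μ u ρ ht']
  · push_neg at ht'
    obtain ⟨k', hk1', hk2'⟩ := grid_exists_k hT' ht'
    rw [orbitOn_neg F μ u ρ ht, orbitOn_eq_filterFold F z μ u ρ hz hT' hk1' hk2',
      stepList_nil hT' hs' hk1' hk2' hs hT.1.monotone ht, List.foldl_nil]
  · push_neg at ht
    obtain ⟨k, hk1, hk2⟩ := grid_exists_k hT ht
    rw [orbitOn_neg F μ u ρ ht', orbitOn_eq_filterFold F z μ u ρ hz hT hk1 hk2,
      stepList_nil hT hs hk1 hk2 hs' hT'.1.monotone ht', List.foldl_nil]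
  · push_neg at ht ht'
    obtain ⟨k, hk1, hk2⟩ := grid_exists_k hT ht
    obtain ⟨k', hk1', hk2'⟩ := grid_exists_k hT' ht'
    rw [orbitOn_eq_filterFold F z μ u ρ hz hT hk1 hk2,
      orbitOn_eq_filterFold F z μ u ρ hz hT' hk1' hk2',
      stepList_eq hT hT' hs hs' hk1 hk2 hk1' hk2']
/-! ### Refinement preserves fitting -/

lemma fitsGrid_of_subset {α : Type*} {u : ℝ → α} {T T' : ℕ → ℝ}
    (hT : IsGrid T) (hT' : IsGrid T') (hsub : Set.range T ⊆ Set.range T')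
    (hu : FitsGrid u T) : FitsGrid u T' := by
  have h0 : T' 0 ≤ T 0 := by
    obtain ⟨j, hj⟩ := hsub ⟨0, rfl⟩
    rw [← hj]
    exact hT'.1.monotone (Nat.zero_le j)
  constructor
  · intro s s' h h'
    exact hu.1 s s' (lt_of_lt_of_le h h0) (lt_of_lt_of_le h' h0)
  · intro k s h1 h2
    by_cases hc : T' k < T 0
    · obtain ⟨j, hj⟩ := hsub ⟨0, rfl⟩
      have hkj : k < j := by
        rw [← hj] at hc
        exact hT'.1.lt_iff_lt.1 hc
      have hle : T' (k + 1) ≤ T 0 := by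
        rw [← hj]
        exact hT'.1.monotone (Nat.succ_le.2 hkj)
      exact hu.1 s (T' k) (lt_of_lt_of_le h2 hle) hc
    · push_neg at hc
      obtain ⟨i, hi1, hi2⟩ := grid_exists_k hT hc
      obtain ⟨j, hj⟩ := hsub ⟨i + 1, rfl⟩
      have hkj : k < j := by
        rw [← hj] at hi2
        exact hT'.1.lt_iff_lt.1 hi2
      have hle : T' (k + 1) ≤ T (i + 1) := by
        rw [← hj]
        exact hT'.1.monotone (Nat.succ_le.2 hkj)
      have e1 : u s = u (T i) := hu.2 i s (le_trans hi1 h1) (lt_of_lt_of_le h2 hle)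
      have e2 : u (T' k) = u (T i) := hu.2 i (T' k) hi1 hi2
      rw [e1, e2]

/-! ### Merging two grids -/

noncomputable def mIdx (T1 T2 : ℕ → ℝ) : ℕ → ℕ × ℕ
  | 0 => (0, 0)
  | k + 1 =>
    if T1 (mIdx T1 T2 k).1 < T2 (mIdx T1 T2 k).2 then
      ((mIdx T1 T2 k).1 + 1, (mIdx T1 T2 k).2)
    else if T2 (mIdx T1 T2 k).2 < T1 (mIdx T1 T2 k).1 then
      ((mIdx T1 T2 k).1, (mIdx T1 T2 k).2 + 1)
    else ((mIdx T1 T2 k).1 + 1, (mIdx T1 T2 k).2 + 1)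

noncomputable def mGrid (T1 T2 : ℕ → ℝ) (k : ℕ) : ℝ :=
  min (T1 (mIdx T1 T2 k).1) (T2 (mIdx T1 T2 k).2)

lemma mIdx_swap (T1 T2 : ℕ → ℝ) (k : ℕ) :
    mIdx T2 T1 k = ((mIdx T1 T2 k).2, (mIdx T1 T2 k).1) := by
  induction k with
  | zero => rfl
  | succ k ih =>
    rw [mIdx, mIdx, ih]
    rcases lt_trichotomy (T1 (mIdx T1 T2 k).1) (T2 (mIdx T1 T2 k).2) with h | h | h
    · rw [if_neg (asymm h), if_pos h, if_pos h]
    · rw [if_neg (by rw [h]; exact lt_irrefl _), if_neg (by rw [h]; exact lt_irrefl _),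
        if_neg (by rw [h]; exact lt_irrefl _), if_neg (by rw [h]; exact lt_irrefl _)]
    · rw [if_pos h, if_neg (asymm h), if_pos h]

lemma mGrid_swap (T1 T2 : ℕ → ℝ) (k : ℕ) : mGrid T2 T1 k = mGrid T1 T2 k := by
  rw [mGrid, mGrid, mIdx_swap]
  exact min_comm _ _

/-- Case analysis for one step of the merge. -/
lemma mIdx_succ_cases (T1 T2 : ℕ → ℝ) (k : ℕ) :
    (T2 (mIdx T1 T2 k).2 < T1 (mIdx T1 T2 k).1 ∧
      mIdx T1 T2 (k + 1) = ((mIdx T1 T2 k).1, (mIdx T1 T2 k).2 + 1)) ∨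
    (T1 (mIdx T1 T2 k).1 ≤ T2 (mIdx T1 T2 k).2 ∧
      (mIdx T1 T2 (k + 1)).1 = (mIdx T1 T2 k).1 + 1 ∧
      mGrid T1 T2 k = T1 (mIdx T1 T2 k).1) := by
  rcases lt_trichotomy (T1 (mIdx T1 T2 k).1) (T2 (mIdx T1 T2 k).2) with h | h | h
  · right
    refine ⟨le_of_lt h, ?_, ?_⟩
    · rw [mIdx, if_pos h]
    · rw [mGrid]
      exact min_eq_left (le_of_lt h)
  · right
    refine ⟨le_of_eq h, ?_, ?_⟩
    · rw [mIdx, if_neg (by rw [h]; exact lt_irrefl _), if_neg (by rw [h]; exact lt_irrefl _)]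
    · rw [mGrid]
      exact min_eq_left (le_of_eq h)
  · left
    refine ⟨h, ?_⟩
    rw [mIdx, if_neg (asymm h), if_pos h]

lemma mIdx_fst_succ_le (T1 T2 : ℕ → ℝ) (k : ℕ) :
    (mIdx T1 T2 k).1 ≤ (mIdx T1 T2 (k + 1)).1 ∧
      (mIdx T1 T2 (k + 1)).1 ≤ (mIdx T1 T2 k).1 + 1 := by
  rcases mIdx_succ_cases T1 T2 k with ⟨_, h⟩ | ⟨_, h, _⟩
  · rw [h]; omega
  · omega

lemma mIdx_fst_mono (T1 T2 : ℕ → ℝ) : Monotone fun k => (mIdx T1 T2 k).1 :=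
  monotone_nat_of_le_succ fun k => (mIdx_fst_succ_le T1 T2 k).1

lemma mGrid_strictMono {T1 T2 : ℕ → ℝ} (h1 : StrictMono T1) (h2 : StrictMono T2) :
    StrictMono (mGrid T1 T2) := by
  apply strictMono_nat_of_lt_succ
  intro k
  rcases lt_trichotomy (T1 (mIdx T1 T2 k).1) (T2 (mIdx T1 T2 k).2) with h | h | h
  · have hnext : mIdx T1 T2 (k + 1) = ((mIdx T1 T2 k).1 + 1, (mIdx T1 T2 k).2) := by
      rw [mIdx, if_pos h]
    rw [mGrid, mGrid, hnext]
    calc min (T1 (mIdx T1 T2 k).1) (T2 (mIdx T1 T2 k).2) ≤ T1 (mIdx T1 T2 k).1 :=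
          min_le_left _ _
      _ < min (T1 ((mIdx T1 T2 k).1 + 1)) (T2 (mIdx T1 T2 k).2) :=
          lt_min (h1 (Nat.lt_succ_self _)) h
  · have hnext : mIdx T1 T2 (k + 1) = ((mIdx T1 T2 k).1 + 1, (mIdx T1 T2 k).2 + 1) := by
      rw [mIdx, if_neg (by rw [h]; exact lt_irrefl _), if_neg (by rw [h]; exact lt_irrefl _)]
    rw [mGrid, mGrid, hnext]
    calc min (T1 (mIdx T1 T2 k).1) (T2 (mIdx T1 T2 k).2) ≤ T1 (mIdx T1 T2 k).1 :=
          min_le_left _ _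
      _ < min (T1 ((mIdx T1 T2 k).1 + 1)) (T2 ((mIdx T1 T2 k).2 + 1)) :=
          lt_min (h1 (Nat.lt_succ_self _)) (by rw [h]; exact h2 (Nat.lt_succ_self _))
  · have hnext : mIdx T1 T2 (k + 1) = ((mIdx T1 T2 k).1, (mIdx T1 T2 k).2 + 1) := by
      rw [mIdx, if_neg (asymm h), if_pos h]
    rw [mGrid, mGrid, hnext]
    calc min (T1 (mIdx T1 T2 k).1) (T2 (mIdx T1 T2 k).2) ≤ T2 (mIdx T1 T2 k).2 :=
          min_le_right _ _
      _ < min (T1 (mIdx T1 T2 k).1) (T2 ((mIdx T1 T2 k).2 + 1)) :=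
          lt_min h (h2 (Nat.lt_succ_self _))
/-- While the first pointer stalls, the second one advances one per step. -/
lemma mIdx_stall (T1 T2 : ℕ → ℝ) (k : ℕ) :
    ∀ d : ℕ, (∃ k', (mIdx T1 T2 k).1 < (mIdx T1 T2 k').1) ∨
      mIdx T1 T2 (k + d) = ((mIdx T1 T2 k).1, (mIdx T1 T2 k).2 + d) := by
  intro d
  induction d with
  | zero => right; rfl
  | succ d ih =>
    rcases ih with h | h
    · left; exact h
    · rcases mIdx_succ_cases T1 T2 (k + d) with ⟨_, hstep⟩ | ⟨_, hstep, _⟩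
      · right
        rw [← Nat.add_assoc, hstep, h]
        simp [Nat.add_assoc]
      · left
        refine ⟨k + d + 1, ?_⟩
        rw [hstep, h]
        omega

lemma mIdx_fst_progress {T1 T2 : ℕ → ℝ} (h2 : StrictMono T2)
    (h2u : ∀ M : ℝ, ∃ k, M < T2 k) (k : ℕ) :
    ∃ k', (mIdx T1 T2 k).1 < (mIdx T1 T2 k').1 := by
  obtain ⟨J, hJ⟩ := h2u (T1 (mIdx T1 T2 k).1)
  rcases mIdx_stall T1 T2 k (J + 1) with h | h
  · exact h
  · -- at step k + (J+1) the second coordinate is large, hence fst advances next step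
    rcases mIdx_succ_cases T1 T2 (k + (J + 1)) with ⟨hlt, _⟩ | ⟨_, hstep, _⟩
    · exfalso
      rw [h] at hlt
      have : T2 J ≤ T2 ((mIdx T1 T2 k).2 + (J + 1)) := h2.monotone (by omega)
      simp only [h] at hlt
      exact absurd (lt_trans (lt_of_le_of_lt this hlt) hJ) (lt_irrefl _)
    · refine ⟨k + (J + 1) + 1, ?_⟩
      rw [hstep, h]
      omega

lemma mIdx_fst_unbounded {T1 T2 : ℕ → ℝ} (h2 : StrictMono T2)
    (h2u : ∀ M : ℝ, ∃ k, M < T2 k) (i : ℕ) :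
    ∃ k, i < (mIdx T1 T2 k).1 := by
  induction i with
  | zero =>
    obtain ⟨k', hk'⟩ := mIdx_fst_progress (T1 := T1) h2 h2u 0
    exact ⟨k', by omega⟩
  | succ i ih =>
    obtain ⟨k, hk⟩ := ih
    obtain ⟨k', hk'⟩ := mIdx_fst_progress (T1 := T1) h2 h2u k
    exact ⟨k', by omega⟩

lemma mGrid_mem_fst {T1 T2 : ℕ → ℝ} (h2 : StrictMono T2)
    (h2u : ∀ M : ℝ, ∃ k, M < T2 k) (i : ℕ) :
    ∃ k, mGrid T1 T2 k = T1 i := by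
  have hS : {k : ℕ | i + 1 ≤ (mIdx T1 T2 (k + 1)).1}.Nonempty := by
    obtain ⟨k0, hk0⟩ := mIdx_fst_unbounded (T1 := T1) h2 h2u i
    have hk0ne : k0 ≠ 0 := by
      intro h
      rw [h] at hk0
      simp [mIdx] at hk0
    obtain ⟨m, hm⟩ := Nat.exists_eq_succ_of_ne_zero hk0ne
    rw [hm, Nat.succ_eq_add_one] at hk0
    exact ⟨m, hk0⟩
  set k := sInf {k : ℕ | i + 1 ≤ (mIdx T1 T2 (k + 1)).1} with hkdef
  have hk1 : i + 1 ≤ (mIdx T1 T2 (k + 1)).1 := Nat.sInf_mem hS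
  have hkfst : (mIdx T1 T2 k).1 = i := by
    have hub : (mIdx T1 T2 (k + 1)).1 ≤ (mIdx T1 T2 k).1 + 1 := (mIdx_fst_succ_le T1 T2 k).2
    have hlow : (mIdx T1 T2 k).1 ≤ i := by
      rcases Nat.eq_zero_or_pos k with h0 | hpos
      · rw [h0]
        simp [mIdx]
      · obtain ⟨m, hm⟩ := Nat.exists_eq_succ_of_ne_zero (Nat.pos_iff_ne_zero.1 hpos)
        have : m ∉ {k : ℕ | i + 1 ≤ (mIdx T1 T2 (k + 1)).1} := by
          intro hmem
          have := Nat.sInf_le hmem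
          omega
        simp only [Set.mem_setOf_eq, not_le] at this
        rw [hm, Nat.succ_eq_add_one]
        omega
    omega
  rcases mIdx_succ_cases T1 T2 k with ⟨_, hstep⟩ | ⟨_, _, hval⟩
  · exfalso
    rw [hstep] at hk1
    simp only [hkfst] at hk1
    omega
  · exact ⟨k, by rw [hval, hkfst]⟩

lemma exists_merge {T1 T2 : ℕ → ℝ} (h1 : IsGrid T1) (h2 : IsGrid T2) :
    ∃ T3, IsGrid T3 ∧ Set.range T1 ⊆ Set.range T3 ∧ Set.range T2 ⊆ Set.range T3 := by
  refine ⟨mGrid T1 T2, ⟨mGrid_strictMono h1.1 h2.1, ?_⟩, ?_, ?_⟩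
  · intro M
    obtain ⟨i, hi⟩ := h1.2 M
    obtain ⟨k, hk⟩ := mGrid_mem_fst (T1 := T1) h2.1 h2.2 i
    exact ⟨k, by rw [hk]; exact hi⟩
  · rintro x ⟨i, rfl⟩
    obtain ⟨k, hk⟩ := mGrid_mem_fst (T1 := T1) h2.1 h2.2 i
    exact ⟨k, hk⟩
  · rintro x ⟨j, rfl⟩
    obtain ⟨k, hk⟩ := mGrid_mem_fst (T1 := T2) h1.1 h1.2 j
    exact ⟨k, by rw [← hk, mGrid_swap]⟩

/-- serial orbit lemma in real time: the pair of the orbit of `Φ`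
under `ρ` and the orbit of `Ψ` under `ρ̃` driven by the first orbit equals the
orbit of the serial composition `Ψ∗Φ` under the excitation `(ρ,ρ̃)`. -/
theorem serial_orbit_real_time {n m p : ℕ}
    (Φ : (Fin n → Bool) → (Fin m → Bool) → (Fin n → Bool))
    (Ψ : (Fin p → Bool) → (Fin n → Bool) → (Fin p → Bool))
    (μ : Fin n → Bool) (δ : Fin p → Bool)
    (u : ℝ → Fin m → Bool) (ρ : ℝ → Fin n → Bool) (ρ' : ℝ → Fin p → Bool)
    (hu : IsSignal u) (hρ : IsProgressive ρ) (hρ' : IsProgressive ρ') :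
    ∀ t : ℝ,
      (orbit (phiNu Φ) (zeroB n) μ u ρ t,
        orbit (phiNu Ψ) (zeroB p) δ (orbit (phiNu Φ) (zeroB n) μ u ρ) ρ' t) =
      orbit (serialNu Ψ Φ) (zeroB n, zeroB p) (μ, δ) u (fun s => (ρ s, ρ' s)) t := by
  classical
  obtain ⟨μu, tu, htu1, htu2, htu3, htu4⟩ := hu
  obtain ⟨tr, htr1, htr2, htr3, -⟩ := hρ
  obtain ⟨tr', htr'1, htr'2, htr'3, -⟩ := hρ'
  have gu : IsGrid tu := ⟨htu1, htu2⟩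
  have gr : IsGrid tr := ⟨htr1, htr2⟩
  have gr' : IsGrid tr' := ⟨htr'1, htr'2⟩
  have hfu : FitsGrid u tu := ⟨fun s s' h h' => by rw [htu3 s h, htu3 s' h'], htu4⟩
  have hsr : SupportedOn (zeroB n) ρ tr := htr3
  have hsr' : SupportedOn (zeroB p) ρ' tr' := htr'3
  -- master grid refining all three
  obtain ⟨T0, gT0, sub_u, sub_r⟩ := exists_merge gu gr
  obtain ⟨Tm, gTm, sub0, sub_r'⟩ := exists_merge gT0 gr'
  have subu : Set.range tu ⊆ Set.range Tm := fun x hx => sub0 (sub_u hx)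
  have subr : Set.range tr ⊆ Set.range Tm := fun x hx => sub0 (sub_r hx)
  have hfuT : FitsGrid u Tm := fitsGrid_of_subset gu gTm subu hfu
  have hsrT : SupportedOn (zeroB n) ρ Tm := fun s hs => hsr s fun h => hs (subr h)
  have hsr'T : SupportedOn (zeroB p) ρ' Tm := fun s hs => hsr' s fun h => hs (sub_r' h)
  have hsPair : SupportedOn (zeroB n, zeroB p) (fun s => (ρ s, ρ' s)) Tm := by
    intro s hs
    show (ρ s, ρ' s) = (zeroB n, zeroB p)
    rw [hsrT s hs, hsr'T s hs]
  -- identity laws for the zero excitation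
  have hzΦ : ∀ (s : Fin n → Bool) (i : Fin m → Bool), phiNu Φ (zeroB n) s i = s := by
    intro s i
    funext j
    simp [phiNu, zeroB]
  have hzΨ : ∀ (s : Fin p → Bool) (i : Fin n → Bool), phiNu Ψ (zeroB p) s i = s := by
    intro s i
    funext j
    simp [phiNu, zeroB]
  have hzS : ∀ (s : (Fin n → Bool) × (Fin p → Bool)) (i : Fin m → Bool),
      serialNu Ψ Φ (zeroB n, zeroB p) s i = s := by
    intro s i
    show (phiNu Φ (zeroB n) s.1 i, phiNu Ψ (zeroB p) s.2 (phiNu Φ (zeroB n) s.1 i)) = s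
    rw [hzΦ, hzΨ]
  -- the first orbit
  have h1 : ∃ T, IsGrid T ∧ FitsGrid u T ∧ SupportedOn (zeroB n) ρ T := ⟨Tm, gTm, hfuT, hsrT⟩
  set x := orbit (phiNu Φ) (zeroB n) μ u ρ with hxdef
  have hx : x = orbitOn (phiNu Φ) μ u ρ h1.choose := by
    rw [hxdef, orbit, dif_pos h1]
  have hx1 : ∀ t, x t = orbitOn (phiNu Φ) μ u ρ Tm t := by
    intro t
    rw [hx]
    exact orbitOn_invariant _ _ _ _ _ hzΦ h1.choose_spec.1 gTm h1.choose_spec.2.2 hsrT t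
  -- the second orbit exists
  obtain ⟨T2m, gT2m, sub2a, sub2b⟩ := exists_merge h1.choose_spec.1 gr'
  have hfx : FitsGrid x T2m := by
    rw [hx]
    exact fitsGrid_of_subset h1.choose_spec.1 gT2m sub2a
      (fitsGrid_orbitOn _ _ _ _ h1.choose_spec.1)
  have h2 : ∃ T, IsGrid T ∧ FitsGrid x T ∧ SupportedOn (zeroB p) ρ' T :=
    ⟨T2m, gT2m, hfx, fun s hs => hsr' s fun h => hs (sub2b h)⟩
  have hy : ∀ t, orbit (phiNu Ψ) (zeroB p) δ x ρ' t = orbitOn (phiNu Ψ) δ x ρ' Tm t := by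
    intro t
    rw [orbit, dif_pos h2]
    exact orbitOn_invariant _ _ _ _ _ hzΨ h2.choose_spec.1 gTm h2.choose_spec.2.2 hsr'T t
  -- the serial orbit
  have h3 : ∃ T, IsGrid T ∧ FitsGrid u T ∧
      SupportedOn (zeroB n, zeroB p) (fun s => (ρ s, ρ' s)) T := ⟨Tm, gTm, hfuT, hsPair⟩
  have hserial : ∀ t, orbit (serialNu Ψ Φ) (zeroB n, zeroB p) (μ, δ) u (fun s => (ρ s, ρ' s)) t
      = orbitOn (serialNu Ψ Φ) (μ, δ) u (fun s => (ρ s, ρ' s)) Tm t := by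
    intro t
    rw [orbit, dif_pos h3]
    exact orbitOn_invariant _ _ _ _ _ hzS h3.choose_spec.1 gTm h3.choose_spec.2.2 hsPair t
  -- the first orbit at grid points
  have hxk : ∀ k, x (Tm k) = omegaSeq (phiNu Φ) μ u ρ Tm k := by
    intro k
    rw [hx1]
    exact orbitOn_eval _ _ _ _ gTm (le_refl (Tm k)) (gTm.1 (Nat.lt_succ_self k))
  -- key induction over the common grid
  have key : ∀ k, (omegaSeq (phiNu Φ) μ u ρ Tm k, omegaSeq (phiNu Ψ) δ x ρ' Tm k)
      = omegaSeq (serialNu Ψ Φ) (μ, δ) u (fun s => (ρ s, ρ' s)) Tm k := by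
    intro k
    induction k with
    | zero =>
      have h0 := hxk 0
      simp only [omegaSeq] at h0 ⊢
      rw [h0]
      rfl
    | succ k ih =>
      have hk1 := hxk (k + 1)
      simp only [omegaSeq] at hk1 ⊢
      rw [hk1, ← ih]
      rfl
  -- conclusion
  intro t
  rw [hy t, hserial t, hx1 t]
  by_cases ht : t < Tm 0
  · rw [orbitOn_neg _ _ _ _ ht, orbitOn_neg _ _ _ _ ht, orbitOn_neg _ _ _ _ ht]
  · push_neg at ht
    obtain ⟨k, hk1, hk2⟩ := grid_exists_k gTm ht
    rw [orbitOn_eval _ _ _ _ gTm hk1 hk2, orbitOn_eval _ _ _ _ gTm hk1 hk2,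
      orbitOn_eval _ _ _ _ gTm hk1 hk2]
    exact key k
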